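/- For real a > 0 and n >= 1, sqrt(a^2+1) * (a + sqrt(a^2+1))^{n-1} - |T_n(ai)| = (sqrt(a^2+1) - a) * |T_{n-1}(ai)|, where T_n is the Chebyshev polynomial of the first kind evaluated at the purely imaginary point ai. -/

import Mathlib

open Polynomial

/-- Comparison of the extremal growth value with `|T_n(ai)|`. -/
theorem stmt10 (a : ℝ) (ha : 0 < a) (n : ℕ) (hn : 1 ≤ n) :
    Real.sqrt (a ^ 2 + 1) * (a + Real.sqrt (a ^ 2 + 1)) ^ (n - 1) -
        ‖(Polynomial.Chebyshev.T ℂ (n : ℤ)).eval ((a : ℂ) * Complex.I)‖ =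
      (Real.sqrt (a ^ 2 + 1) - a) *
        ‖(Polynomial.Chebyshev.T ℂ ((n : ℤ) - 1)).eval ((a : ℂ) * Complex.I)‖ := by
  set s := Real.sqrt (a ^ 2 + 1) with hs
  have hs2 : s ^ 2 = a ^ 2 + 1 := Real.sq_sqrt (by positivity)
  have hs0 : 0 ≤ s := Real.sqrt_nonneg _
  have hs1 : 1 ≤ s := by nlinarith
  set b := a + s with hb
  have hb1 : 1 ≤ b := by nlinarith
  have hbpos : 0 < b := by linarith
  set c := b⁻¹ with hc
  have hcpos : 0 < c := by positivity
  have hsa : s - a = c := by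
    have h : b * (s - a) = 1 := by rw [hb]; nlinarith
    exact eq_inv_of_mul_eq_one_right h
  have hbc : b * c = 1 := mul_inv_cancel₀ (ne_of_gt hbpos)
  have h2a : b - c = 2 * a := by rw [← hsa, hb]; ring
  have h2s : b + c = 2 * s := by rw [← hsa, hb]; ring
  set f : ℕ → ℝ := fun k => (b ^ k + (-1) ^ k * c ^ k) / 2 with hf
  have hrec : ∀ k : ℕ, f (k + 2) = 2 * a * f (k + 1) + f k := by
    intro k
    simp only [hf]
    linear_combination ((b ^ (k+1) - (-1:ℝ) ^ k * c ^ (k+1)) / 2) * h2a +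
      ((b ^ k + (-1:ℝ) ^ k * c ^ k) / 2) * hbc
  have key : ∀ k : ℕ, (Polynomial.Chebyshev.T ℂ (k : ℤ)).eval ((a : ℂ) * Complex.I)
      = Complex.I ^ k * (f k : ℝ) := by
    have H : ∀ k : ℕ, ((Polynomial.Chebyshev.T ℂ (k : ℤ)).eval ((a : ℂ) * Complex.I)
        = Complex.I ^ k * (f k : ℝ)) ∧
        ((Polynomial.Chebyshev.T ℂ ((k+1 : ℕ) : ℤ)).eval ((a : ℂ) * Complex.I)
        = Complex.I ^ (k+1) * (f (k+1) : ℝ)) := by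
      intro k
      induction k with
      | zero =>
        constructor
        · simp [Polynomial.Chebyshev.T_zero, hf]
        · have h1 : f 1 = a := by simp [hf, ← hsa]; ring
          simp [Polynomial.Chebyshev.T_one, h1]
          ring
      | succ k ih =>
        refine ⟨ih.2, ?_⟩
        have hcast : ((k + 1 + 1 : ℕ) : ℤ) = (k : ℤ) + 2 := by push_cast; ring
        rw [hcast, Polynomial.Chebyshev.T_add_two]
        have hc1 : ((k : ℤ) + 1) = ((k + 1 : ℕ) : ℤ) := by push_cast; ring
        simp only [eval_sub, eval_mul, eval_ofNat, eval_X, hc1, ih.1, ih.2]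
        have hrecC : ((f (k + 2) : ℝ) : ℂ) = 2 * (a : ℂ) * (f (k + 1) : ℝ) + (f k : ℝ) := by
          rw [hrec k]; push_cast; ring
        have hI2 : Complex.I ^ (k + 1 + 1) = -Complex.I ^ k := by
          rw [pow_succ, pow_succ, mul_assoc, Complex.I_mul_I]; ring
        have hI1 : Complex.I ^ (k + 1) = Complex.I ^ k * Complex.I := pow_succ _ _
        rw [show k + 1 + 1 = k + 2 from rfl] at hI2 ⊢
        rw [hI2, hrecC, hI1]
        ring_nf
        rw [Complex.I_sq]
        ring
    exact fun k => (H k).1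
  have hfpos : ∀ k : ℕ, 0 ≤ f k := by
    intro k
    have hck : c ^ k ≤ b ^ k := pow_le_pow_left₀ (le_of_lt hcpos) (by nlinarith) k
    have hc0 : (0:ℝ) ≤ c ^ k := by positivity
    rcases Nat.even_or_odd k with h | h
    · simp only [hf, h.neg_one_pow, one_mul]; positivity
    · simp only [hf, h.neg_one_pow, neg_one_mul]; nlinarith
  have habs : ∀ k : ℕ, ‖(Polynomial.Chebyshev.T ℂ (k : ℤ)).eval ((a : ℂ) * Complex.I)‖ = f k := by
    intro k
    rw [key k, norm_mul, norm_pow, Complex.norm_I, Complex.norm_real, Real.norm_eq_abs, one_pow, one_mul,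
      abs_of_nonneg (hfpos k)]
  obtain ⟨m, rfl⟩ : ∃ m, n = m + 1 := ⟨n - 1, (Nat.succ_pred_eq_of_pos hn).symm⟩
  have hm1 : ((m + 1 : ℕ) : ℤ) - 1 = (m : ℤ) := by push_cast; ring
  rw [hm1, habs m, habs (m + 1), Nat.add_sub_cancel]
  rw [hsa]
  simp only [hf]
  linear_combination (-(b ^ m) / 2) * h2s
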